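/- For small λ > 0, the Wronskian W(λ) = W(f₊(·,λ), f₋(·,λ)) of the Jost solutions satisfies W(λ) = 2λ(1 + ic₃ + i(2/π)log λ) + O(λ^{3/2−ε}) and W'(λ) = 2(1 + ic₃ + i(2/π) + i(2/π)log λ) + O(λ^{1/2−ε}) for any ε > 0. -/

import Mathlib

open Real Complex Asymptotics Filter Topology

local notation "L0" => nhdsWithin (0:ℝ) (Set.Ioi 0)

private lemma rpowO {s t : ℝ} (h : t ≤ s) :
    (fun x : ℝ => x ^ s) =O[L0] fun x => x ^ t := by
  rw [isBigO_iff]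
  refine ⟨1, ?_⟩
  filter_upwards [Ioo_mem_nhdsGT_of_mem (by constructor <;> norm_num : (0:ℝ) ∈ Set.Ico (0:ℝ) 1)]
    with x hx
  have hx0 : 0 < x := hx.1
  rw [Real.norm_eq_abs, Real.norm_eq_abs, abs_of_pos (Real.rpow_pos_of_pos hx0 _),
    abs_of_pos (Real.rpow_pos_of_pos hx0 _), one_mul]
  exact Real.rpow_le_rpow_of_exponent_ge hx0 hx.2.le h

private lemma Omono {f : ℝ → ℂ} {s t : ℝ} (h : t ≤ s) (hf : f =O[L0] fun x => x ^ s) :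
    f =O[L0] fun x => x ^ t := hf.trans (rpowO h)

private lemma OmulO {f g : ℝ → ℂ} {s t : ℝ} (hf : f =O[L0] fun x => x ^ s)
    (hg : g =O[L0] fun x => x ^ t) :
    (fun x => f x * g x) =O[L0] fun x => x ^ (s + t) := by
  refine (hf.mul hg).congr' .rfl ?_
  filter_upwards [self_mem_nhdsWithin] with x hx
  exact (Real.rpow_add hx _ _).symm

private lemma constO (c : ℂ) {t : ℝ} (ht : t ≤ 0) : (fun _ : ℝ => c) =O[L0] fun x => x ^ t := by
  refine Omono ht ?_
  rw [isBigO_iff]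
  refine ⟨‖c‖, ?_⟩
  filter_upwards [self_mem_nhdsWithin] with x hx
  simp [Real.rpow_zero]

private lemma logO {t : ℝ} (ht : t < 0) :
    (fun x : ℝ => ((Real.log x : ℝ) : ℂ)) =O[L0] fun x => x ^ t :=
  (Complex.ofRealCLM.isBigO_comp Real.log L0).trans (isLittleO_log_rpow_nhdsGT_zero ht).isBigO

private lemma sqrtO : (fun x : ℝ => ((Real.sqrt x : ℝ) : ℂ)) =O[L0] fun x => x ^ ((1:ℝ)/2) := by
  rw [isBigO_iff]
  refine ⟨1, ?_⟩
  filter_upwards [self_mem_nhdsWithin] with x hx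
  rw [Complex.norm_real, Real.norm_eq_abs, Real.norm_eq_abs,
    _root_.abs_of_nonneg (Real.sqrt_nonneg _),
    abs_of_pos (Real.rpow_pos_of_pos hx _), one_mul, Real.sqrt_eq_rpow]

private lemma sqrtinvO :
    (fun x : ℝ => (((Real.sqrt x)⁻¹ : ℝ) : ℂ)) =O[L0] fun x => x ^ (-(1:ℝ)/2) := by
  rw [isBigO_iff]
  refine ⟨1, ?_⟩
  filter_upwards [self_mem_nhdsWithin] with x hx
  have h : x ^ (-(1:ℝ)/2) = (x ^ ((1:ℝ)/2))⁻¹ := by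
    rw [show (-(1:ℝ)/2) = -((1:ℝ)/2) by norm_num, Real.rpow_neg hx.out.le]
  rw [Complex.norm_real, Real.norm_eq_abs, Real.norm_eq_abs, abs_inv,
    _root_.abs_of_nonneg (Real.sqrt_nonneg _), abs_of_pos (Real.rpow_pos_of_pos hx _), one_mul,
    Real.sqrt_eq_rpow, h]

private lemma keyconst :
    (((2:ℝ) ^ ((1:ℝ)/4) : ℝ) : ℂ) *
      (Real.sqrt (Real.pi/2) * Complex.exp (Complex.I * Real.pi / 4)) *
      ((((2:ℝ) ^ (-(1:ℝ)/4) : ℝ)) : ℂ) *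
      (Real.sqrt (Real.pi/2) * Complex.exp (Complex.I * Real.pi / 4)) *
      (2/Real.pi) = Complex.I := by
  have h1 : ((2:ℝ) ^ ((1:ℝ)/4)) * ((2:ℝ) ^ (-(1:ℝ)/4)) = 1 := by
    rw [← Real.rpow_add two_pos]; norm_num
  have h2 : (Real.sqrt (Real.pi/2)) * (Real.sqrt (Real.pi/2)) = Real.pi/2 :=
    Real.mul_self_sqrt (by positivity)
  have h3 : Complex.exp (Complex.I * Real.pi / 4) * Complex.exp (Complex.I * Real.pi / 4)
      = Complex.I := by
    rw [← Complex.exp_add]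
    have : Complex.I * Real.pi / 4 + Complex.I * Real.pi / 4 = (Real.pi/2 : ℝ) * Complex.I := by
      push_cast; ring
    rw [this, Complex.exp_mul_I, ← Complex.ofReal_cos, ← Complex.ofReal_sin,
      Real.cos_pi_div_two, Real.sin_pi_div_two]
    simp
  have hpi : (Real.pi : ℂ) ≠ 0 := Complex.ofReal_ne_zero.2 Real.pi_ne_zero
  have hp : (Real.pi : ℂ) * ((Real.pi : ℂ))⁻¹ = 1 := mul_inv_cancel₀ hpi
  generalize hu : ((2:ℝ) ^ ((1:ℝ)/4) : ℝ) = u at h1 ⊢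
  generalize hv : ((2:ℝ) ^ (-(1:ℝ)/4) : ℝ) = v at h1 ⊢
  generalize hE : Complex.exp (Complex.I * Real.pi / 4) = E at h3 ⊢
  generalize hs : Real.sqrt (Real.pi/2) = sq at h2 ⊢
  have h1' : (u : ℂ) * (v : ℂ) = 1 := by rw [← Complex.ofReal_mul, h1, Complex.ofReal_one]
  have h2' : (sq : ℂ) * (sq : ℂ) = (Real.pi : ℂ) / 2 := by
    rw [← Complex.ofReal_mul, h2]; push_cast; ring
  rw [div_eq_mul_inv]
  linear_combination (2 * (sq : ℂ) * (sq : ℂ) *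
      E * E * ((Real.pi : ℂ))⁻¹) * h1' +
    (2 * E * E * ((Real.pi : ℂ))⁻¹) * h2' + (E * E) * hp + h3

/-- small-`λ` expansion of the Wronskian `W(λ) = -2a₊(λ)b₊(λ)`
of the Jost solutions:
`W(λ) = 2λ(1 + ic₃ + i(2/π) log λ) + O(λ^{3/2-ε})` and
`W'(λ) = 2(1 + ic₃ + i(2/π) + i(2/π) log λ) + O(λ^{1/2-ε})`, for any `ε > 0`.
The context facts — `W = -2a₊b₊` and the small-`λ` expansions of `a₊, b₊` and
their derivatives (with `c₀ = √(π/2)e^{iπ/4}`, `c₁ = 2/π`) — are hypotheses. -/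
theorem wronskian_small_energy_expansion
    (a b W : ℝ → ℂ) (c₃ : ℝ)
    (hW : ∀ lam : ℝ, W lam = -2 * a lam * b lam)
    (hdiff : ∀ lam : ℝ, 0 < lam → DifferentiableAt ℝ a lam ∧
      DifferentiableAt ℝ b lam)
    (ha : ∀ ε : ℝ, 0 < ε → ∃ C lam₀ : ℝ, 0 < lam₀ ∧
      ∀ lam : ℝ, 0 < lam → lam < lam₀ →
        ‖a lam - ((2:ℝ) ^ ((1:ℝ)/4) : ℝ) *
            (Real.sqrt (Real.pi/2) * Complex.exp (Complex.I * Real.pi / 4)) *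
            Real.sqrt lam *
            (1 + Complex.I * (2/Real.pi) * Real.log lam + Complex.I * c₃)‖
          ≤ C * lam ^ (1 - ε)
        ∧ ‖b lam - Complex.I * ((2:ℝ) ^ (-(1:ℝ)/4) : ℝ) *
            (Real.sqrt (Real.pi/2) * Complex.exp (Complex.I * Real.pi / 4)) *
            (2/Real.pi) * Real.sqrt lam‖
          ≤ C * lam ^ (1 - ε))
    (ha' : ∀ ε : ℝ, 0 < ε → ∃ C lam₀ : ℝ, 0 < lam₀ ∧
      ∀ lam : ℝ, 0 < lam → lam < lam₀ →
        ‖deriv a lam - (1/2) * ((2:ℝ) ^ ((1:ℝ)/4) : ℝ) *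
            (Real.sqrt (Real.pi/2) * Complex.exp (Complex.I * Real.pi / 4)) *
            (Real.sqrt lam)⁻¹ *
            (1 + Complex.I * c₃ + 2 * Complex.I * (2/Real.pi)
              + Complex.I * (2/Real.pi) * Real.log lam)‖
          ≤ C * lam ^ (-ε)
        ∧ ‖deriv b lam - Complex.I / 2 * ((2:ℝ) ^ (-(1:ℝ)/4) : ℝ) *
            (Real.sqrt (Real.pi/2) * Complex.exp (Complex.I * Real.pi / 4)) *
            (2/Real.pi) * (Real.sqrt lam)⁻¹‖
          ≤ C * lam ^ (-ε)) :
    ∀ ε : ℝ, 0 < ε → ∃ C lam₀ : ℝ, 0 < lam₀ ∧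
      ∀ lam : ℝ, 0 < lam → lam < lam₀ →
        ‖W lam - 2 * lam *
            (1 + Complex.I * c₃ + Complex.I * (2/Real.pi) * Real.log lam)‖
          ≤ C * lam ^ ((3:ℝ)/2 - ε)
        ∧ ‖deriv W lam - 2 *
            (1 + Complex.I * c₃ + Complex.I * (2/Real.pi)
              + Complex.I * (2/Real.pi) * Real.log lam)‖
          ≤ C * lam ^ ((1:ℝ)/2 - ε) := by
  intro ε hε
  set e : ℝ := min ε 1 with hedef
  have he0 : 0 < e := lt_min hε one_pos
  have heε : e ≤ ε := min_le_left _ _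
  have he1 : e ≤ 1 := min_le_right _ _
  have he2 : 0 < e/2 := by linarith
  -- main-term functions (exactly as in the hypotheses)
  set aM : ℝ → ℂ := fun x => ((2:ℝ) ^ ((1:ℝ)/4) : ℝ) *
      (Real.sqrt (Real.pi/2) * Complex.exp (Complex.I * Real.pi / 4)) *
      Real.sqrt x *
      (1 + Complex.I * (2/Real.pi) * Real.log x + Complex.I * c₃) with haMdef
  set bM : ℝ → ℂ := fun x => Complex.I * ((2:ℝ) ^ (-(1:ℝ)/4) : ℝ) *
      (Real.sqrt (Real.pi/2) * Complex.exp (Complex.I * Real.pi / 4)) *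
      (2/Real.pi) * Real.sqrt x with hbMdef
  set aM' : ℝ → ℂ := fun x => (1/2) * ((2:ℝ) ^ ((1:ℝ)/4) : ℝ) *
      (Real.sqrt (Real.pi/2) * Complex.exp (Complex.I * Real.pi / 4)) *
      (Real.sqrt x)⁻¹ *
      (1 + Complex.I * c₃ + 2 * Complex.I * (2/Real.pi)
        + Complex.I * (2/Real.pi) * Real.log x) with haM'def
  set bM' : ℝ → ℂ := fun x => Complex.I / 2 * ((2:ℝ) ^ (-(1:ℝ)/4) : ℝ) *
      (Real.sqrt (Real.pi/2) * Complex.exp (Complex.I * Real.pi / 4)) *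
      (2/Real.pi) * (Real.sqrt x)⁻¹ with hbM'def
  -- hypotheses as IsBigO statements
  obtain ⟨C₁, l₁, hl₁, hb₁⟩ := ha (e/2) he2
  obtain ⟨C₂, l₂, hl₂, hb₂⟩ := ha' (e/2) he2
  have hA : (fun x => a x - aM x) =O[L0] fun x => x ^ (1 - e/2) := by
    refine IsBigO.of_bound C₁ ?_
    filter_upwards [Ioo_mem_nhdsGT_of_mem ⟨le_refl (0:ℝ), hl₁⟩] with x hx
    rw [Real.norm_eq_abs, abs_of_pos (Real.rpow_pos_of_pos hx.1 _)]
    exact (hb₁ x hx.1 hx.2).1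
  have hB : (fun x => b x - bM x) =O[L0] fun x => x ^ (1 - e/2) := by
    refine IsBigO.of_bound C₁ ?_
    filter_upwards [Ioo_mem_nhdsGT_of_mem ⟨le_refl (0:ℝ), hl₁⟩] with x hx
    rw [Real.norm_eq_abs, abs_of_pos (Real.rpow_pos_of_pos hx.1 _)]
    exact (hb₁ x hx.1 hx.2).2
  have hA' : (fun x => deriv a x - aM' x) =O[L0] fun x => x ^ (-(e/2)) := by
    refine IsBigO.of_bound C₂ ?_
    filter_upwards [Ioo_mem_nhdsGT_of_mem ⟨le_refl (0:ℝ), hl₂⟩] with x hx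
    rw [Real.norm_eq_abs, abs_of_pos (Real.rpow_pos_of_pos hx.1 _)]
    exact (hb₂ x hx.1 hx.2).1
  have hB' : (fun x => deriv b x - bM' x) =O[L0] fun x => x ^ (-(e/2)) := by
    refine IsBigO.of_bound C₂ ?_
    filter_upwards [Ioo_mem_nhdsGT_of_mem ⟨le_refl (0:ℝ), hl₂⟩] with x hx
    rw [Real.norm_eq_abs, abs_of_pos (Real.rpow_pos_of_pos hx.1 _)]
    exact (hb₂ x hx.1 hx.2).2
  -- asymptotics of the main terms
  have hne2 : -(e/2) < 0 := by linarith
  have hP : (fun x : ℝ => 1 + Complex.I * (2/Real.pi) * Real.log x + Complex.I * c₃)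
      =O[L0] fun x => x ^ (-(e/2)) := by
    refine (((logO hne2).const_mul_left (Complex.I * (2/Real.pi))).add
      (constO (1 + Complex.I * c₃) hne2.le)).congr_left fun x => by ring
  have hQ : (fun x : ℝ => 1 + Complex.I * c₃ + 2 * Complex.I * (2/Real.pi)
      + Complex.I * (2/Real.pi) * Real.log x) =O[L0] fun x => x ^ (-(e/2)) := by
    refine (((logO hne2).const_mul_left (Complex.I * (2/Real.pi))).add
      (constO (1 + Complex.I * c₃ + 2 * Complex.I * (2/Real.pi)) hne2.le)).congr_left
      fun x => by ring
  have haM : aM =O[L0] fun x => x ^ ((1:ℝ)/2 + -(e/2)) := by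
    refine ((OmulO sqrtO hP).const_mul_left
      (((2:ℝ) ^ ((1:ℝ)/4) : ℝ) *
        (Real.sqrt (Real.pi/2) * Complex.exp (Complex.I * Real.pi / 4)))).congr_left
      fun x => by rw [haMdef] <;> ring
  have hbM : bM =O[L0] fun x => x ^ ((1:ℝ)/2) := by
    refine (sqrtO.const_mul_left
      (Complex.I * ((2:ℝ) ^ (-(1:ℝ)/4) : ℝ) *
        (Real.sqrt (Real.pi/2) * Complex.exp (Complex.I * Real.pi / 4)) *
        (2/Real.pi))).congr_left fun x => by rw [hbMdef] <;> ring
  have haM' : aM' =O[L0] fun x => x ^ (-(1:ℝ)/2 + -(e/2)) := by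
    refine ((OmulO sqrtinvO hQ).const_mul_left
      ((1/2) * ((2:ℝ) ^ ((1:ℝ)/4) : ℝ) *
        (Real.sqrt (Real.pi/2) * Complex.exp (Complex.I * Real.pi / 4)))).congr_left
      fun x => by rw [haM'def] <;> ring
  have hbM' : bM' =O[L0] fun x => x ^ (-(1:ℝ)/2) := by
    refine (sqrtinvO.const_mul_left
      (Complex.I / 2 * ((2:ℝ) ^ (-(1:ℝ)/4) : ℝ) *
        (Real.sqrt (Real.pi/2) * Complex.exp (Complex.I * Real.pi / 4)) *
        (2/Real.pi))).congr_left fun x => by rw [hbM'def] <;> ring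
  have hb : b =O[L0] fun x => x ^ ((1:ℝ)/2) :=
    ((Omono (by linarith : (1:ℝ)/2 ≤ 1 - e/2) hB).add hbM).congr_left fun x => by ring
  have hb' : deriv b =O[L0] fun x => x ^ (-(1:ℝ)/2) :=
    ((Omono (by linarith : -(1:ℝ)/2 ≤ -(e/2)) hB').add hbM').congr_left fun x => by ring
  -- pointwise identities
  have key1 : ∀ x : ℝ, 0 < x →
      W x - 2 * x * (1 + Complex.I * c₃ + Complex.I * (2/Real.pi) * Real.log x)
        = -2 * ((a x - aM x) * b x + aM x * (b x - bM x)) := by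
    intro x hx
    have hSS : ((Real.sqrt x : ℝ) : ℂ) * ((Real.sqrt x : ℝ) : ℂ) = (x : ℂ) := by
      rw [← Complex.ofReal_mul, Real.mul_self_sqrt hx.le]
    have hI : Complex.I * Complex.I = -1 := Complex.I_mul_I
    rw [hW x, haMdef, hbMdef]
    linear_combination (-2 * Complex.I * ((Real.sqrt x : ℝ) : ℂ) * ((Real.sqrt x : ℝ) : ℂ) *
        (1 + Complex.I * (2/Real.pi) * Real.log x + Complex.I * c₃)) * keyconst +
      (2 * (1 + Complex.I * (2/Real.pi) * Real.log x + Complex.I * c₃)) * hSS +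
      (-2 * ((Real.sqrt x : ℝ) : ℂ) * ((Real.sqrt x : ℝ) : ℂ) *
        (1 + Complex.I * (2/Real.pi) * Real.log x + Complex.I * c₃)) * hI
  have hderivW : ∀ x : ℝ, 0 < x →
      deriv W x = -2 * (deriv a x * b x + a x * deriv b x) := by
    intro x hx
    have hWf : W = fun l => -2 * (a l * b l) := funext fun l => by rw [hW]; ring
    rw [hWf, deriv_const_mul _ ((hdiff x hx).1.fun_mul (hdiff x hx).2),
      deriv_fun_mul (hdiff x hx).1 (hdiff x hx).2] <;> ring
  have key2 : ∀ x : ℝ, 0 < x →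
      deriv W x - 2 * (1 + Complex.I * c₃ + Complex.I * (2/Real.pi)
          + Complex.I * (2/Real.pi) * Real.log x)
        = -2 * ((deriv a x - aM' x) * b x + aM' x * (b x - bM x)
            + (a x - aM x) * deriv b x + aM x * (deriv b x - bM' x)) := by
    intro x hx
    have hS1 : ((Real.sqrt x : ℝ) : ℂ) * (((Real.sqrt x)⁻¹ : ℝ) : ℂ) = 1 := by
      rw [← Complex.ofReal_mul, mul_inv_cancel₀ (Real.sqrt_pos.2 hx).ne', Complex.ofReal_one]
    have hI : Complex.I * Complex.I = -1 := Complex.I_mul_I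
    rw [hderivW x hx, haMdef, hbMdef, haM'def, hbM'def]
    linear_combination (-Complex.I * (((Real.sqrt x : ℝ) : ℂ) * (((Real.sqrt x)⁻¹ : ℝ) : ℂ)) *
        ((1 + Complex.I * c₃ + 2 * Complex.I * (2/Real.pi)
            + Complex.I * (2/Real.pi) * Real.log x)
          + (1 + Complex.I * (2/Real.pi) * Real.log x + Complex.I * c₃))) * keyconst +
      ((1 + Complex.I * c₃ + 2 * Complex.I * (2/Real.pi)
          + Complex.I * (2/Real.pi) * Real.log x)
        + (1 + Complex.I * (2/Real.pi) * Real.log x + Complex.I * c₃)) * hS1 +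
      (-(((Real.sqrt x : ℝ) : ℂ) * (((Real.sqrt x)⁻¹ : ℝ) : ℂ)) *
        ((1 + Complex.I * c₃ + 2 * Complex.I * (2/Real.pi)
            + Complex.I * (2/Real.pi) * Real.log x)
          + (1 + Complex.I * (2/Real.pi) * Real.log x + Complex.I * c₃))) * hI
  -- the two big-O estimates
  have hW1 : (fun x : ℝ => W x - 2 * x *
      (1 + Complex.I * c₃ + Complex.I * (2/Real.pi) * Real.log x))
      =O[L0] fun x => x ^ ((3:ℝ)/2 - ε) := by
    have t1 : (fun x => (a x - aM x) * b x) =O[L0] fun x => x ^ ((3:ℝ)/2 - ε) :=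
      Omono (by linarith) (OmulO hA hb)
    have t2 : (fun x => aM x * (b x - bM x)) =O[L0] fun x => x ^ ((3:ℝ)/2 - ε) :=
      Omono (by linarith) (OmulO haM hB)
    refine ((t1.add t2).const_mul_left (-2)).congr' ?_ .rfl
    filter_upwards [self_mem_nhdsWithin] with x hx
    exact (key1 x hx).symm
  have hW2 : (fun x : ℝ => deriv W x - 2 * (1 + Complex.I * c₃ + Complex.I * (2/Real.pi)
      + Complex.I * (2/Real.pi) * Real.log x)) =O[L0] fun x => x ^ ((1:ℝ)/2 - ε) := by
    have t1 : (fun x => (deriv a x - aM' x) * b x) =O[L0] fun x => x ^ ((1:ℝ)/2 - ε) :=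
      Omono (by linarith) (OmulO hA' hb)
    have t2 : (fun x => aM' x * (b x - bM x)) =O[L0] fun x => x ^ ((1:ℝ)/2 - ε) :=
      Omono (by linarith) (OmulO haM' hB)
    have t3 : (fun x => (a x - aM x) * deriv b x) =O[L0] fun x => x ^ ((1:ℝ)/2 - ε) :=
      Omono (by linarith) (OmulO hA hb')
    have t4 : (fun x => aM x * (deriv b x - bM' x)) =O[L0] fun x => x ^ ((1:ℝ)/2 - ε) :=
      Omono (by linarith) (OmulO haM hB')
    refine (((t1.add t2).add (t3.add t4)).const_mul_left (-2)).congr' ?_ .rfl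
    filter_upwards [self_mem_nhdsWithin] with x hx
    rw [key2 x hx]; ring
  -- extract explicit constants
  rw [isBigO_iff] at hW1 hW2
  obtain ⟨D₁, hD₁⟩ := hW1
  obtain ⟨D₂, hD₂⟩ := hW2
  obtain ⟨u, hu, hsub⟩ := mem_nhdsGT_iff_exists_Ioo_subset.1 (hD₁.and hD₂)
  refine ⟨max D₁ D₂, u, hu, fun x hx hxu => ?_⟩
  obtain ⟨h1, h2⟩ := hsub ⟨hx, hxu⟩
  rw [Real.norm_eq_abs, abs_of_pos (Real.rpow_pos_of_pos hx _)] at h1 h2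
  constructor
  · exact h1.trans (mul_le_mul_of_nonneg_right (le_max_left _ _) (Real.rpow_nonneg hx.le _))
  · exact h2.trans (mul_le_mul_of_nonneg_right (le_max_right _ _) (Real.rpow_nonneg hx.le _))
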